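/- Let K be a field, m ≥ 1, G a subgroup of GL_m(K), and g ∈ G. Then there exists an integer k > 0 such that C_G(g^k) = C_G(g^{kn}) for every integer n ≠ 0. -/

import Mathlib

open Module

private lemma cent_inv_eq {K : Type*} [Field K] {R : Type*} [Ring R] [Algebra K R]
    (v : Rˣ) : Subalgebra.centralizer K ({(↑v⁻¹ : R)} : Set R) =
      Subalgebra.centralizer K {(v : R)} := by
  ext x
  simp only [Subalgebra.mem_centralizer_iff, Set.mem_singleton_iff, forall_eq]
  constructor
  · intro h
    have h' : Commute x (↑v⁻¹ : R) := h.symm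
    simpa [Commute, SemiconjBy] using h'.units_inv_right.symm
  · intro h
    have h' : Commute x (v : R) := h.symm
    exact h'.units_inv_right.symm

theorem exists_power_with_constant_centralizer {K : Type*} [Field K] {m : ℕ} (hm : 1 ≤ m)
    (G : Subgroup (Matrix.GeneralLinearGroup (Fin m) K)) (g : G) :
    ∃ k : ℕ, 0 < k ∧ ∀ n : ℤ, n ≠ 0 →
      Subgroup.centralizer {g ^ ((k : ℤ) * n)} = Subgroup.centralizer {g ^ (k : ℤ)} := by
  classical
  set R := Matrix (Fin m) (Fin m) K with hR
  let u : Rˣ := (g : Matrix.GeneralLinearGroup (Fin m) K)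
  let C : Rˣ → Subalgebra K R := fun v => Subalgebra.centralizer K {(v : R)}
  let f : ℕ → ℕ := fun j => finrank K (C (u ^ j))
  -- the values of f are bounded
  have hbdd : ∀ j, f j ≤ finrank K R := fun j =>
    Submodule.finrank_le (Subalgebra.toSubmodule (C (u ^ j)))
  -- pick k ≥ 1 maximizing f
  have hS : (f '' {j | 0 < j}).Nonempty := ⟨f 1, 1, Set.mem_setOf.mpr one_pos, rfl⟩
  have hSb : BddAbove (f '' {j | 0 < j}) := ⟨finrank K R, by rintro _ ⟨j, -, rfl⟩; exact hbdd j⟩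
  obtain ⟨k, hk, hfk⟩ := Nat.sSup_mem hS hSb
  have hmax : ∀ j, 0 < j → f j ≤ f k := fun j hj => hfk ▸ le_csSup hSb ⟨j, hj, rfl⟩
  -- monotonicity of centralizers along powers
  have hle : ∀ j : ℕ, C (u ^ k) ≤ C (u ^ (k * j)) := by
    intro j x hx
    intro a ha
    rw [Set.mem_singleton_iff] at ha
    subst ha
    have h1 : Commute ((u ^ k : Rˣ) : R) x := hx _ rfl
    have h2 : Commute (((u ^ k : Rˣ) : R) ^ j) x := h1.pow_left j
    simpa [Commute, SemiconjBy, ← Units.val_pow_eq_pow_val, ← pow_mul] using h2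
  -- hence equality for all j ≥ 1
  have heq : ∀ j : ℕ, 0 < j → C (u ^ (k * j)) = C (u ^ k) := by
    intro j hj
    exact (Subalgebra.eq_of_le_of_finrank_le (hle j) (hmax (k * j) (Nat.mul_pos hk hj))).symm
  refine ⟨k, hk, ?_⟩
  intro n hn
  -- reduce the zpow to a natural power (or its inverse)
  have hzpow : C (u ^ ((k : ℤ) * n)) = C (u ^ k) := by
    rcases lt_or_gt_of_ne hn with hneg | hpos
    · have : u ^ ((k : ℤ) * n) = (u ^ (k * n.natAbs))⁻¹ := by
        rw [← zpow_natCast, ← zpow_neg]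
        congr 1
        push_cast
        rw [abs_of_neg hneg]
        ring
      rw [this]
      exact (cent_inv_eq _).trans (heq n.natAbs (Int.natAbs_pos.mpr hn))
    · have : u ^ ((k : ℤ) * n) = u ^ (k * n.natAbs) := by
        rw [← zpow_natCast]
        congr 1
        push_cast
        rw [abs_of_pos hpos]
      rw [this]
      exact heq n.natAbs (Int.natAbs_pos.mpr hn)
  -- membership in the subgroup centralizer is equivalent to subalgebra centralizer membership
  have hmem : ∀ (z : ℤ) (x : G), x ∈ Subgroup.centralizer {g ^ z} ↔
      ((x : Matrix.GeneralLinearGroup (Fin m) K) : R) ∈ C (u ^ z) := by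
    intro z x
    rw [Subgroup.mem_centralizer_iff]
    simp only [Set.mem_singleton_iff, forall_eq]
    rw [Subalgebra.mem_centralizer_iff]
    simp only [Set.mem_singleton_iff, forall_eq]
    constructor
    · intro h
      have h2 : ((g ^ z * x : G) : Matrix.GeneralLinearGroup (Fin m) K)
          = ((x * g ^ z : G) : Matrix.GeneralLinearGroup (Fin m) K) := congrArg _ h
      rw [Subgroup.coe_mul, Subgroup.coe_mul, SubgroupClass.coe_zpow] at h2
      have h3 := congrArg Units.val h2
      simp only [Units.val_mul] at h3
      exact h3
    · intro h
      have h2 : ((g : Matrix.GeneralLinearGroup (Fin m) K) ^ z) * (x : Matrix.GeneralLinearGroup (Fin m) K)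
          = (x : Matrix.GeneralLinearGroup (Fin m) K) * ((g : Matrix.GeneralLinearGroup (Fin m) K) ^ z) :=
        Units.ext (by simp only [Units.val_mul]; exact h)
      exact Subtype.ext (by rw [Subgroup.coe_mul, Subgroup.coe_mul, SubgroupClass.coe_zpow]; exact h2)
  ext x
  rw [hmem, hmem]
  have hk' : C (u ^ ((k : ℕ) : ℤ)) = C (u ^ k) := by rw [zpow_natCast]
  rw [hzpow, hk']
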